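/- Let u, v : ℝ^d × [0,T] → ℝ^d, σ ∈ ℝ^{d×d} constant, f C¹, and V C² with σᵀ∇V = u + v (Nelson's relation). Then the integrand identity div(f + σu) + σᵀ∇V · (u − w) − (1/2)‖σᵀ∇V‖² − Tr(σσᵀ∇²V) = div(f − σv) − (u+v)·(w + (v−u)/2) − Tr(σσᵀ∇²V) + div(σ(u+v)) − div(σ(u+v)) holds pointwise; in particular, using div(σ(u+v)) = div(σσᵀ∇V) = Tr(σσᵀ∇²V), we get div(f + σu) + σᵀ∇V·(u − w) − (1/2)‖σᵀ∇V‖² − Tr(σσᵀ∇²V) = div(f − σv) − (u+v)·(w + (v−u)/2). -/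

import Mathlib

open Real MeasureTheory Set

/-- Spatial partial derivative in direction `i`. -/
noncomputable def pder {d : ℕ} (i : Fin d) (f : (Fin d → ℝ) → ℝ) (x : Fin d → ℝ) : ℝ :=
  fderiv ℝ f x (Pi.single i 1)

/-- Spatial divergence of a vector field. -/
noncomputable def divg {d : ℕ} (F : (Fin d → ℝ) → Fin d → ℝ) (x : Fin d → ℝ) : ℝ :=
  ∑ i, pder i (fun y => F y i) x

/-- Second partial derivative ∂_i ∂_j f. -/
noncomputable def hess2 {d : ℕ} (f : (Fin d → ℝ) → ℝ) (x : Fin d → ℝ) (i j : Fin d) : ℝ :=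
  pder i (fun y => pder j f y) x

/-- Tr(A ∇²f)(x). -/
noncomputable def trHess {d : ℕ} (A : Matrix (Fin d) (Fin d) ℝ) (f : (Fin d → ℝ) → ℝ)
    (x : Fin d → ℝ) : ℝ :=
  ∑ i, ∑ j, A i j * hess2 f x i j

/-- ‖σᵀ ∇f‖²(x). -/
noncomputable def sigGradSq {d : ℕ} (σ : Matrix (Fin d) (Fin d) ℝ) (f : (Fin d → ℝ) → ℝ)
    (x : Fin d → ℝ) : ℝ :=
  ∑ j, (∑ i, σ i j * pder i f x) ^ 2

/-- the pointwise integrand identity behind the equivalence of the logFP-BSDE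
loss and the bridge loss, under Nelson's relation `σᵀ∇V = u + v`:
`div(f + σu) + σᵀ∇V·(u − w) − (1/2)‖σᵀ∇V‖² − Tr(σσᵀ∇²V)
  = div(f − σv) − (u+v)·(w + (v−u)/2)`. -/
theorem bsde_bridge_integrand_identity {d : ℕ} (T : ℝ) (hT : 0 < T)
    (u v w f : (Fin d → ℝ) → ℝ → Fin d → ℝ)
    (σ : Matrix (Fin d) (Fin d) ℝ)
    (V : (Fin d → ℝ) → ℝ → ℝ)
    (hV : ∀ t, ContDiff ℝ 2 (fun y => V y t))
    (hu : ∀ t i, ContDiff ℝ 1 (fun y => u y t i))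
    (hv : ∀ t i, ContDiff ℝ 1 (fun y => v y t i))
    (hf : ∀ t i, ContDiff ℝ 1 (fun y => f y t i))
    -- Nelson's relation σᵀ∇V = u + v:
    (hNelson : ∀ (x : Fin d → ℝ) (t : ℝ) (j : Fin d),
        (∑ i, σ i j * pder i (fun y => V y t) x) = u x t j + v x t j) :
    ∀ (x : Fin d → ℝ) (t : ℝ),
      divg (fun y i => f y t i + ∑ j, σ i j * u y t j) x
        + (∑ j, (∑ i, σ i j * pder i (fun y => V y t) x) * (u x t j - w x t j))
        - (1 / 2) * sigGradSq σ (fun y => V y t) x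
        - trHess (σ * σ.transpose) (fun y => V y t) x
      = divg (fun y i => f y t i - ∑ j, σ i j * v y t j) x
        - ∑ j, (u x t j + v x t j) * (w x t j + (v x t j - u x t j) / 2) := by
  intro x t
  set Vt : (Fin d → ℝ) → ℝ := fun y => V y t with hVtdef
  -- differentiability facts
  have hVd : ∀ k, ContDiff ℝ 1 (fun y => pder k Vt y) := by
    intro k
    have h1 : ContDiff ℝ 1 (fderiv ℝ Vt) :=
      (hV t).fderiv_right (m := 1) (by norm_num)
    exact h1.clm_apply contDiff_const
  have hud : ∀ j, DifferentiableAt ℝ (fun y => u y t j) x :=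
    fun j => ((hu t j).differentiable one_ne_zero).differentiableAt
  have hvd : ∀ j, DifferentiableAt ℝ (fun y => v y t j) x :=
    fun j => ((hv t j).differentiable one_ne_zero).differentiableAt
  have hfd : ∀ i, DifferentiableAt ℝ (fun y => f y t i) x :=
    fun i => ((hf t i).differentiable one_ne_zero).differentiableAt
  -- generic linearity of pder over sums of scalar multiples
  have pder_add : ∀ (i : Fin d) (g h : (Fin d → ℝ) → ℝ),
      DifferentiableAt ℝ g x → DifferentiableAt ℝ h x →
      pder i (fun y => g y + h y) x = pder i g x + pder i h x := by
    intro i g h hg hh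
    unfold pder
    rw [fderiv_fun_add hg hh]
    rfl
  have pder_sub : ∀ (i : Fin d) (g h : (Fin d → ℝ) → ℝ),
      DifferentiableAt ℝ g x → DifferentiableAt ℝ h x →
      pder i (fun y => g y - h y) x = pder i g x - pder i h x := by
    intro i g h hg hh
    unfold pder
    rw [fderiv_fun_sub hg hh]
    rfl
  have pder_sum : ∀ (i : Fin d) (g : Fin d → (Fin d → ℝ) → ℝ),
      (∀ j, DifferentiableAt ℝ (g j) x) →
      pder i (fun y => ∑ j, g j y) x = ∑ j, pder i (g j) x := by
    intro i g hg
    unfold pder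
    rw [fderiv_fun_sum (fun j _ => hg j)]
    simp
  have pder_const_mul : ∀ (i : Fin d) (c : ℝ) (g : (Fin d → ℝ) → ℝ),
      DifferentiableAt ℝ g x →
      pder i (fun y => c * g y) x = c * pder i g x := by
    intro i c g hg
    unfold pder
    rw [fderiv_const_mul hg]
    rfl
  -- key: ∂ᵢuⱼ + ∂ᵢvⱼ = ∑ₖ σₖⱼ ∂ᵢ∂ₖV
  have hmix : ∀ (i j : Fin d),
      pder i (fun y => u y t j) x + pder i (fun y => v y t j) x
        = ∑ k, σ k j * hess2 Vt x i k := by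
    intro i j
    have he : (fun y => ∑ k, σ k j * pder k Vt y) = fun y => u y t j + v y t j := by
      funext y; exact hNelson y t j
    have h1 : pder i (fun y => u y t j + v y t j) x
        = pder i (fun y => u y t j) x + pder i (fun y => v y t j) x :=
      pder_add i _ _ (hud j) (hvd j)
    have h2 : pder i (fun y => ∑ k, σ k j * pder k Vt y) x
        = ∑ k, σ k j * hess2 Vt x i k := by
      rw [pder_sum i _ (fun k => (((hVd k).differentiable one_ne_zero).const_mul (σ k j)).differentiableAt)]
      refine Finset.sum_congr rfl (fun k _ => ?_)
      rw [pder_const_mul i _ _ ((hVd k).differentiable one_ne_zero).differentiableAt]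
      rfl
    rw [← h1, ← he, h2]
  -- divergences
  have hdiv1 : divg (fun y i => f y t i + ∑ j, σ i j * u y t j) x
      = divg (fun y i => f y t i) x + ∑ i, ∑ j, σ i j * pder i (fun y => u y t j) x := by
    unfold divg
    rw [← Finset.sum_add_distrib]
    refine Finset.sum_congr rfl (fun i _ => ?_)
    rw [pder_add i _ _ (hfd i)
      (DifferentiableAt.fun_sum (fun j _ => ((hud j).const_mul (σ i j))))]
    congr 1
    rw [pder_sum i _ (fun j => (hud j).const_mul (σ i j))]
    exact Finset.sum_congr rfl (fun j _ => pder_const_mul i _ _ (hud j))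
  have hdiv2 : divg (fun y i => f y t i - ∑ j, σ i j * v y t j) x
      = divg (fun y i => f y t i) x - ∑ i, ∑ j, σ i j * pder i (fun y => v y t j) x := by
    unfold divg
    rw [← Finset.sum_sub_distrib]
    refine Finset.sum_congr rfl (fun i _ => ?_)
    rw [pder_sub i _ _ (hfd i)
      (DifferentiableAt.fun_sum (fun j _ => ((hvd j).const_mul (σ i j))))]
    congr 1
    rw [pder_sum i _ (fun j => (hvd j).const_mul (σ i j))]
    exact Finset.sum_congr rfl (fun j _ => pder_const_mul i _ _ (hvd j))
  -- trace identity
  have htr : (∑ i, ∑ j, σ i j * pder i (fun y => u y t j) x)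
      + (∑ i, ∑ j, σ i j * pder i (fun y => v y t j) x)
      = trHess (σ * σ.transpose) Vt x := by
    rw [← Finset.sum_add_distrib]
    unfold trHess
    refine Finset.sum_congr rfl (fun i _ => ?_)
    rw [← Finset.sum_add_distrib]
    have : ∑ j, (σ i j * pder i (fun y => u y t j) x + σ i j * pder i (fun y => v y t j) x)
        = ∑ j, ∑ k, σ i j * (σ k j * hess2 Vt x i k) := by
      refine Finset.sum_congr rfl (fun j _ => ?_)
      rw [← mul_add, hmix i j, Finset.mul_sum]
    rw [this, Finset.sum_comm]
    refine Finset.sum_congr rfl (fun k _ => ?_)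
    rw [Matrix.mul_apply, Finset.sum_mul]
    refine Finset.sum_congr rfl (fun j _ => ?_)
    rw [Matrix.transpose_apply]
    ring
  -- substitute Nelson into the dot products
  have hsig : sigGradSq σ Vt x = ∑ j, (u x t j + v x t j) ^ 2 := by
    unfold sigGradSq
    exact Finset.sum_congr rfl (fun j _ => by rw [hNelson x t j])
  have hdot : (∑ j, (∑ i, σ i j * pder i Vt x) * (u x t j - w x t j))
      = ∑ j, (u x t j + v x t j) * (u x t j - w x t j) :=
    Finset.sum_congr rfl (fun j _ => by rw [hNelson x t j])
  rw [hdiv1, hdiv2, hsig, hdot, ← htr]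
  have halg : (∑ j, (u x t j + v x t j) * (u x t j - w x t j))
      - (1 / 2) * ∑ j, (u x t j + v x t j) ^ 2
      = - ∑ j, (u x t j + v x t j) * (w x t j + (v x t j - u x t j) / 2) := by
    rw [Finset.mul_sum, ← Finset.sum_sub_distrib, ← Finset.sum_neg_distrib]
    exact Finset.sum_congr rfl (fun j _ => by ring)
  linarith [halg]
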